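/- Let n ≥ 1, a₁, …, a_p ∈ ℝⁿ and r₁, …, r_p > 0. Let d_max = max_{i,j = 1, …, p} ‖a_i − a_j‖ and r_min = min_{i = 1, …, p} r_i. Then inf_{x ∈ ℝⁿ} max_{i = 1, …, p} ‖x − a_i‖ / r_i ≤ √(n / (2(n + 1))) · d_max / r_min, and in particular this infimum is strictly less than d_max / (√2 · r_min) when d_max > 0. -/

import Mathlib

open Finset Metric RealInnerProductSpace

variable {n : ℕ}


set_option maxHeartbeats 1000000 in
lemma jung {n p : ℕ} (hp : 0 < p) (a : Fin p → EuclideanSpace ℝ (Fin n)) {d : ℝ}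
    (hd : ∀ i j, dist (a i) (a j) ≤ d) :
    ∃ c : EuclideanSpace ℝ (Fin n),
      ∀ i, dist c (a i) ≤ Real.sqrt ((n : ℝ) / (2 * ((n : ℝ) + 1))) * d := by
  haveI : Nonempty (Fin p) := Fin.pos_iff_nonempty.mp hp
  set i0 : Fin p := Classical.arbitrary (Fin p)
  have hd0 : 0 ≤ d := le_trans dist_nonneg (hd i0 i0)
  -- the objective function
  set F : EuclideanSpace ℝ (Fin n) → ℝ :=
    fun x => Finset.univ.sup' Finset.univ_nonempty (fun i => dist x (a i)) with hF_def
  have hFcont : Continuous F :=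
    Continuous.finset_sup'_apply Finset.univ_nonempty
      (fun i _ => Continuous.dist continuous_id continuous_const)
  have hFle : ∀ x i, dist x (a i) ≤ F x := fun x i =>
    Finset.le_sup' (fun i => dist x (a i)) (Finset.mem_univ i)
  have hF0 : ∀ x, 0 ≤ F x := fun x => le_trans dist_nonneg (hFle x i0)
  -- minimizer on a big closed ball, hence globally
  obtain ⟨c, hcball, hcmin'⟩ :=
    (isCompact_closedBall (a i0) (F (a i0))).exists_isMinOn
      ⟨a i0, by simp [hF0 (a i0)]⟩ hFcont.continuousOn
  have hcmin : ∀ x, F c ≤ F x := by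
    intro x
    by_cases hx : x ∈ closedBall (a i0) (F (a i0))
    · exact hcmin' hx
    · have h1 : F (a i0) < dist x (a i0) := by
        simpa [Metric.mem_closedBall] using hx
      have h2 : F c ≤ F (a i0) := hcmin' (by simp [hF0 (a i0)])
      exact h2.trans (h1.le.trans (hFle x i0))
  set R : ℝ := F c with hR_def
  have hRle : ∀ i, dist c (a i) ≤ R := hFle c
  have hR0 : 0 ≤ R := hF0 c
  obtain ⟨imax, -, hmax⟩ :=
    Finset.exists_mem_eq_sup' Finset.univ_nonempty (fun i => dist c (a i))
  -- the touching set
  set S : Set (EuclideanSpace ℝ (Fin n)) := a '' {i | dist c (a i) = R} with hS_def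
  -- claim: c is in the convex hull of the touching set
  have hc_hull : c ∈ convexHull ℝ S := by
    by_contra hcon
    have hSfin : S.Finite := (Set.toFinite _).image a
    obtain ⟨f, u, hfc, hfK⟩ :=
      geometric_hahn_banach_point_closed (convex_convexHull ℝ S)
        (hSfin.isCompact_convexHull (𝕜 := ℝ)).isClosed hcon
    set v := (InnerProductSpace.toDual ℝ (EuclideanSpace ℝ (Fin n))).symm f with hv_def
    have hv : ∀ x : EuclideanSpace ℝ (Fin n), ⟪v, x⟫ = f x := fun x => InnerProductSpace.toDual_symm_apply
    have hamax : a imax ∈ S := ⟨imax, hmax.symm, rfl⟩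
    have hfamax : u < f (a imax) := hfK _ (subset_convexHull ℝ S hamax)
    have hvne : v ≠ 0 := by
      intro h
      have h1 : f c = 0 := by rw [← hv]; simp [h]
      have h2 : f (a imax) = 0 := by rw [← hv]; simp [h]
      rw [h1] at hfc; rw [h2] at hfamax; linarith
    have hvnorm : 0 < ‖v‖ := norm_pos_iff.mpr hvne
    set δ : ℝ := u - f c with hδ_def
    have hδpos : 0 < δ := sub_pos.mpr hfc
    have hδi : ∀ i, dist c (a i) = R → δ < ⟪v, a i - c⟫ := by
      intro i hi
      have : u < f (a i) := hfK _ (subset_convexHull ℝ S ⟨i, hi, rfl⟩)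
      rw [inner_sub_right, hv, hv]
      simp only [hδ_def]; linarith
    -- step size
    set τ : Fin p → ℝ := fun i =>
      if dist c (a i) = R then δ / ‖v‖ ^ 2 else (R - dist c (a i)) / (2 * ‖v‖) with hτ_def
    have hτpos : ∀ i, 0 < τ i := by
      intro i
      simp only [hτ_def]
      split_ifs with h
      · positivity
      · have : dist c (a i) < R := lt_of_le_of_ne (hRle i) h
        have h2 : 0 < R - dist c (a i) := by linarith
        positivity
    set t : ℝ := Finset.univ.inf' Finset.univ_nonempty τ with ht_def
    have htpos : 0 < t := by
      rw [ht_def, Finset.lt_inf'_iff]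
      exact fun i _ => hτpos i
    have htle : ∀ i, t ≤ τ i := fun i => Finset.inf'_le τ (Finset.mem_univ i)
    have hlt : ∀ i, dist (c + t • v) (a i) < R := by
      intro i
      by_cases h : dist c (a i) = R
      · -- touching point: move towards hull
        have hiv : δ < ⟪v, a i - c⟫ := hδi i h
        have hτi : t ≤ δ / ‖v‖ ^ 2 := by
          simpa only [hτ_def, if_pos h] using htle i
        have htv : t * ‖v‖ ^ 2 ≤ δ :=
          (le_div_iff₀ (by positivity)).mp hτi
        have key : ‖c + t • v - a i‖ ^ 2 < R ^ 2 := by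
          have e1 : c + t • v - a i = (c - a i) + t • v := by abel
          rw [e1, norm_add_sq_real, real_inner_smul_right, norm_smul]
          have e2 : ⟪c - a i, v⟫ = - ⟪v, a i - c⟫ := by
            rw [real_inner_comm, ← inner_neg_right]; congr 1; abel
          have e3 : ‖c - a i‖ ^ 2 = R ^ 2 := by
            rw [← dist_eq_norm, h]
          rw [e2, e3]
          have e5 : (‖t‖ * ‖v‖) ^ 2 = t * (t * ‖v‖ ^ 2) := by
            rw [Real.norm_eq_abs, abs_of_pos htpos]; ring
          rw [e5]
          have b1 : t * (- ⟪v, a i - c⟫) < t * (-δ) := by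
            apply mul_lt_mul_of_pos_left _ htpos; linarith
          have b2 : t * (t * ‖v‖ ^ 2) ≤ t * δ :=
            mul_le_mul_of_nonneg_left htv htpos.le
          nlinarith
        have := lt_of_pow_lt_pow_left₀ 2 hR0 key
        rwa [dist_eq_norm]
      · -- non-touching point: small move keeps it strictly inside
        have hlt' : dist c (a i) < R := lt_of_le_of_ne (hRle i) h
        have hτi : t ≤ (R - dist c (a i)) / (2 * ‖v‖) := by
          simpa only [hτ_def, if_neg h] using htle i
        have htv : t * ‖v‖ ≤ (R - dist c (a i)) / 2 := by
          rw [le_div_iff₀ (by positivity)] at hτi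
          rw [le_div_iff₀ (by positivity : (0:ℝ) < 2)]
          nlinarith [hvnorm]
        calc dist (c + t • v) (a i) ≤ dist (c + t • v) c + dist c (a i) := dist_triangle _ _ _
          _ = t * ‖v‖ + dist c (a i) := by
              rw [dist_eq_norm]
              have : c + t • v - c = t • v := by abel
              rw [this, norm_smul, Real.norm_eq_abs, abs_of_pos htpos]
          _ ≤ (R - dist c (a i)) / 2 + dist c (a i) := by linarith
          _ < R := by linarith
    have : F (c + t • v) < R :=
      (Finset.sup'_lt_iff Finset.univ_nonempty).mpr (fun i _ => hlt i)
    exact absurd (hcmin (c + t • v)) (not_le.mpr this)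
  -- Carathéodory
  obtain ⟨ι, hι, z, w, hzS, hzind, hwpos, hwsum, hwz⟩ :=
    eq_pos_convex_span_of_mem_convexHull hc_hull
  letI := hι
  classical
  haveI hιne : Nonempty ι := by
    rcases isEmpty_or_nonempty ι with h | h
    · exfalso; rw [Finset.univ_eq_empty, Finset.sum_empty] at hwsum; exact one_ne_zero hwsum.symm
    · exact h
  have hmn : (Fintype.card ι : ℝ) ≤ (n : ℝ) + 1 := by
    have h1 := hzind.card_le_finrank_succ
    have h2 : Module.finrank ℝ (vectorSpan ℝ (Set.range z)) ≤ n := by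
      have := Submodule.finrank_le (vectorSpan ℝ (Set.range z))
      rwa [finrank_euclideanSpace_fin] at this
    exact_mod_cast h1.trans (by omega)
  have hzR : ∀ k, dist c (z k) = R := by
    intro k
    obtain ⟨i, hi, hzi⟩ := hzS (Set.mem_range_self k)
    rw [← hzi]; exact hi
  have hzd : ∀ k l, dist (z k) (z l) ≤ d := by
    intro k l
    obtain ⟨i, -, hzi⟩ := hzS (Set.mem_range_self k)
    obtain ⟨j, -, hzj⟩ := hzS (Set.mem_range_self l)
    rw [← hzi, ← hzj]; exact hd i j
  set uu : ι → EuclideanSpace ℝ (Fin n) := fun k => z k - c with huu_def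
  have hsum0 : ∑ k, w k • uu k = 0 := by
    simp only [huu_def, smul_sub]
    rw [Finset.sum_sub_distrib, hwz, ← Finset.sum_smul, hwsum, one_smul, sub_self]
  have huuR : ∀ k, ‖uu k‖ ^ 2 = R ^ 2 := by
    intro k
    rw [huu_def, ← dist_eq_norm, dist_comm, hzR k]
  -- the inner sums
  have hin : ∀ k, ∑ l, w l * ‖uu k - uu l‖ ^ 2 = 2 * R ^ 2 := by
    intro k
    have step : ∀ l, w l * ‖uu k - uu l‖ ^ 2 =
        w l * ‖uu k‖ ^ 2 + w l * ‖uu l‖ ^ 2 - 2 * ⟪uu k, w l • uu l⟫ := by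
      intro l
      rw [norm_sub_sq_real, real_inner_smul_right]; ring
    rw [Finset.sum_congr rfl (fun l _ => step l), Finset.sum_sub_distrib,
      Finset.sum_add_distrib, ← Finset.mul_sum, ← inner_sum, hsum0, inner_zero_right]
    have e1 : ∑ l, w l * ‖uu k‖ ^ 2 = R ^ 2 := by
      rw [← Finset.sum_mul, hwsum, huuR k, one_mul]
    have e2 : ∑ l, w l * ‖uu l‖ ^ 2 = R ^ 2 := by
      rw [Finset.sum_congr rfl (fun l _ => by rw [huuR l]), ← Finset.sum_mul, hwsum, one_mul]
    rw [e1, e2]; ring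
  -- upper bound on the inner sums
  have hub : ∀ k, ∑ l, w l * ‖uu k - uu l‖ ^ 2 ≤ d ^ 2 - w k * d ^ 2 := by
    intro k
    have step : ∀ l, w l * ‖uu k - uu l‖ ^ 2 ≤
        w l * d ^ 2 - (if l = k then w k * d ^ 2 else 0) := by
      intro l
      by_cases h : l = k
      · subst h; simp
      · rw [if_neg h, sub_zero]
        apply mul_le_mul_of_nonneg_left _ (hwpos l).le
        have e : uu k - uu l = z k - z l := by rw [huu_def]; exact sub_sub_sub_cancel_right _ _ _
        rw [e, ← dist_eq_norm]
        exact pow_le_pow_left₀ dist_nonneg (hzd k l) 2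
    calc ∑ l, w l * ‖uu k - uu l‖ ^ 2
        ≤ ∑ l, (w l * d ^ 2 - (if l = k then w k * d ^ 2 else 0)) :=
          Finset.sum_le_sum (fun l _ => step l)
      _ = d ^ 2 - w k * d ^ 2 := by
          rw [Finset.sum_sub_distrib, ← Finset.sum_mul, hwsum, one_mul,
            Finset.sum_ite_eq' Finset.univ k, if_pos (Finset.mem_univ k)]
  -- combine
  have hA : 2 * R ^ 2 ≤ d ^ 2 - (∑ k, w k ^ 2) * d ^ 2 := by
    have e1 : 2 * R ^ 2 = ∑ k, w k * (∑ l, w l * ‖uu k - uu l‖ ^ 2) := by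
      rw [Finset.sum_congr rfl (fun k _ => by rw [hin k]), ← Finset.sum_mul, hwsum, one_mul]
    rw [e1]
    calc ∑ k, w k * (∑ l, w l * ‖uu k - uu l‖ ^ 2)
        ≤ ∑ k, w k * (d ^ 2 - w k * d ^ 2) :=
          Finset.sum_le_sum (fun k _ => mul_le_mul_of_nonneg_left (hub k) (hwpos k).le)
      _ = d ^ 2 - (∑ k, w k ^ 2) * d ^ 2 := by
          have e : ∀ k ∈ Finset.univ, w k * (d ^ 2 - w k * d ^ 2)
              = w k * d ^ 2 - w k ^ 2 * d ^ 2 := fun k _ => by ring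
          rw [Finset.sum_congr rfl e, Finset.sum_sub_distrib, ← Finset.sum_mul, hwsum,
            one_mul, ← Finset.sum_mul]
  have hcs : 1 / ((n : ℝ) + 1) ≤ ∑ k, w k ^ 2 := by
    have h1 : (1 : ℝ) ≤ (Fintype.card ι : ℝ) * ∑ k, w k ^ 2 := by
      have := sq_sum_le_card_mul_sum_sq (s := (Finset.univ : Finset ι)) (f := w)
      rw [hwsum, one_pow, Finset.card_univ] at this
      exact_mod_cast this
    have hcard : (0 : ℝ) < (Fintype.card ι : ℝ) := by
      exact_mod_cast Fintype.card_pos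
    calc 1 / ((n : ℝ) + 1) ≤ 1 / (Fintype.card ι : ℝ) :=
          one_div_le_one_div_of_le hcard hmn
      _ ≤ ∑ k, w k ^ 2 := by
          rw [div_le_iff₀ hcard, mul_comm]
          exact h1
  have hn1 : (0 : ℝ) < (n : ℝ) + 1 := by positivity
  have hfinal : R ^ 2 ≤ (n : ℝ) / (2 * ((n : ℝ) + 1)) * d ^ 2 := by
    have hd2 : (0 : ℝ) ≤ d ^ 2 := sq_nonneg d
    have h2 : (∑ k, w k ^ 2) * d ^ 2 ≥ (1 / ((n : ℝ) + 1)) * d ^ 2 :=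
      mul_le_mul_of_nonneg_right hcs hd2
    have h3 : 2 * R ^ 2 ≤ d ^ 2 - (1 / ((n : ℝ) + 1)) * d ^ 2 := by linarith
    have h4 : d ^ 2 - (1 / ((n : ℝ) + 1)) * d ^ 2 = ((n : ℝ) / ((n : ℝ) + 1)) * d ^ 2 := by
      field_simp
      ring
    rw [h4] at h3
    have h5 : (n : ℝ) / (2 * ((n : ℝ) + 1)) * d ^ 2 = ((n : ℝ) / ((n : ℝ) + 1) * d ^ 2) / 2 := by
      rw [mul_comm 2 ((n : ℝ) + 1), ← div_div]; ring
    rw [h5]; linarith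
  refine ⟨c, fun i => (hRle i).trans ?_⟩
  have := Real.sqrt_le_sqrt hfinal
  rw [Real.sqrt_sq hR0, Real.sqrt_mul (by positivity), Real.sqrt_sq hd0] at this
  exact this

open Matrix

/-- `inf_x max_i ‖x − a_i‖ / r_i ≤ √(n/(2(n+1))) · d_max / r_min`, and in
particular the infimum is `< d_max/(√2 r_min)` when `d_max > 0`. -/
theorem stmt16 (n p : ℕ) (hn : 1 ≤ n) (hp : 0 < p)
    (a : Fin p → Fin n → ℝ) (r : Fin p → ℝ) (hr : ∀ i, 0 < r i) :
    sInf (Set.range fun x : Fin n → ℝ =>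
        ⨆ i, Real.sqrt ((x - a i) ⬝ᵥ (x - a i)) / r i) ≤
      Real.sqrt ((n : ℝ) / (2 * ((n : ℝ) + 1))) *
        (⨆ q : Fin p × Fin p, Real.sqrt ((a q.1 - a q.2) ⬝ᵥ (a q.1 - a q.2))) /
        (⨅ i, r i) ∧
    (0 < (⨆ q : Fin p × Fin p, Real.sqrt ((a q.1 - a q.2) ⬝ᵥ (a q.1 - a q.2))) →
      sInf (Set.range fun x : Fin n → ℝ =>
          ⨆ i, Real.sqrt ((x - a i) ⬝ᵥ (x - a i)) / r i) <
        (⨆ q : Fin p × Fin p, Real.sqrt ((a q.1 - a q.2) ⬝ᵥ (a q.1 - a q.2))) /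
          (Real.sqrt 2 * (⨅ i, r i))) := by
  haveI : Nonempty (Fin p) := Fin.pos_iff_nonempty.mp hp
  set e : (Fin n → ℝ) → EuclideanSpace ℝ (Fin n) := fun x => (WithLp.equiv 2 (Fin n → ℝ)).symm x with he
  have hnorm : ∀ x y : Fin n → ℝ, Real.sqrt ((x - y) ⬝ᵥ (x - y)) = dist (e x) (e y) := by
    intro x y
    rw [EuclideanSpace.dist_eq]
    congr 1
    show (x - y) ⬝ᵥ (x - y) = ∑ i, dist ((e x) i) ((e y) i) ^ 2
    apply Finset.sum_congr rfl
    intro i _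
    show (x i - y i) * (x i - y i) = dist ((e x) i) ((e y) i) ^ 2
    show (x i - y i) * (x i - y i) = dist (x i) (y i) ^ 2
    rw [Real.dist_eq, sq_abs]
    ring
  simp only [hnorm]
  set D := ⨆ q : Fin p × Fin p, dist (e (a q.1)) (e (a q.2)) with hD
  have hbddD : ∀ i j, dist (e (a i)) (e (a j)) ≤ D := by
    intro i j
    rw [hD]
    exact le_ciSup (f := fun q : Fin p × Fin p => dist (e (a q.1)) (e (a q.2)))
      (Set.Finite.bddAbove (Set.finite_range _)) ⟨i, j⟩
  obtain ⟨c, hc⟩ := jung hp (fun i => e (a i)) (fun i j => hbddD i j)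
  set B := Real.sqrt ((n : ℝ) / (2 * ((n : ℝ) + 1))) with hB
  have hB0 : 0 ≤ B := Real.sqrt_nonneg _
  have hD0 : 0 ≤ D := le_trans dist_nonneg (hbddD (Classical.arbitrary _) (Classical.arbitrary _))
  obtain ⟨i₁, hi₁⟩ : ∃ i, r i = ⨅ i, r i := exists_eq_ciInf_of_finite
  have hrmin_pos : 0 < ⨅ i, r i := hi₁ ▸ hr i₁
  have hrmin_le : ∀ i, (⨅ i, r i) ≤ r i := fun i =>
    ciInf_le (Set.Finite.bddBelow (Set.finite_range _)) i
  set x0 : Fin n → ℝ := (WithLp.equiv 2 (Fin n → ℝ)) c with hx0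
  have hex0 : e x0 = c := (WithLp.equiv 2 (Fin n → ℝ)).symm_apply_apply c
  have hval : (⨆ i, dist (e x0) (e (a i)) / r i) ≤ B * D / (⨅ i, r i) := by
    apply ciSup_le
    intro i
    rw [hex0]
    exact div_le_div₀ (by positivity) (hc i) hrmin_pos (hrmin_le i)
  have hbdd_below : BddBelow (Set.range fun x : Fin n → ℝ =>
      ⨆ i, dist (e x) (e (a i)) / r i) := by
    refine ⟨0, ?_⟩
    rintro y ⟨x, rfl⟩
    exact Real.iSup_nonneg fun i => div_nonneg dist_nonneg (hr i).le
  have hmain : sInf (Set.range fun x : Fin n → ℝ => ⨆ i, dist (e x) (e (a i)) / r i) ≤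
      B * D / (⨅ i, r i) :=
    le_trans (csInf_le hbdd_below ⟨x0, rfl⟩) hval
  refine ⟨hmain, fun hDpos => lt_of_le_of_lt hmain ?_⟩
  have hBlt : B < (Real.sqrt 2)⁻¹ := by
    rw [hB, ← Real.sqrt_inv]
    apply Real.sqrt_lt_sqrt (by positivity)
    rw [div_lt_iff₀ (by positivity)]
    have hn0 : (0:ℝ) ≤ (n:ℝ) := Nat.cast_nonneg n
    nlinarith
  have h1 : B * D < (Real.sqrt 2)⁻¹ * D := mul_lt_mul_of_pos_right hBlt hDpos
  have h2 : D / (Real.sqrt 2 * (⨅ i, r i)) = ((Real.sqrt 2)⁻¹ * D) / (⨅ i, r i) := by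
    rw [← div_div, inv_mul_eq_div]
  rw [h2]
  exact (div_lt_div_iff_of_pos_right hrmin_pos).mpr h1
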